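/- (Periodicity theorem for real Clifford algebras.) For all natural numbers p and q, the real Clifford algebra Cℓ(p+8, q) is isomorphic as an ℝ-algebra to the tensor product Cℓ(p, q) ⊗_ℝ Cℓ(8, 0). Here Cℓ(p, q) denotes the Clifford algebra of the quadratic form on ℝ^(p+q) given as a weighted sum of squares with p weights equal to +1 and q weights equal to −1. -/

import Mathlib

open scoped TensorProduct
open CliffordAlgebra

/-- The Clifford algebra of signature `(p, q)`. -/
noncomputable def Qpq (p q : ℕ) : QuadraticForm ℝ (Fin (p + q) → ℝ) :=
  QuadraticMap.weightedSumSquares ℝ (fun i => if (i : ℕ) < p then (1 : ℝ) else -1)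

lemma list_prod_anticomm {A : Type*} [Ring A] (x : A) :
    ∀ (l : List A), (∀ a ∈ l, a * x = -(x * a)) →
      l.prod * x = (-1) ^ l.length * (x * l.prod) := by
  intro l
  induction l with
  | nil => simp
  | cons a t ih =>
    intro h
    have ha := h a List.mem_cons_self
    have ht := ih (fun b hb => h b (List.mem_cons_of_mem a hb))
    have hc : a * (-1 : A) ^ t.length = (-1) ^ t.length * a :=
      ((Commute.neg_one_left a).pow_left t.length).symm.eq
    calc (a :: t).prod * x = a * (t.prod * x) := by rw [List.prod_cons, mul_assoc]
    _ = a * ((-1) ^ t.length * (x * t.prod)) := by rw [ht]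
    _ = (-1) ^ t.length * (a * x * t.prod) := by
        rw [← mul_assoc, hc, mul_assoc, mul_assoc]
    _ = (-1) ^ (a :: t).length * (x * (a :: t).prod) := by
        rw [ha, List.length_cons, List.prod_cons, pow_succ]
        simp only [mul_neg_one, mul_neg, neg_mul, neg_neg, neg_inj, mul_assoc, one_mul]

namespace CliffPeriod

lemma Qpq_apply (p q : ℕ) (v : Fin (p + q) → ℝ) :
    Qpq p q v = ∑ i : Fin (p + q), (if (i : ℕ) < p then (1 : ℝ) else -1) * (v i * v i) := by
  simp [Qpq, QuadraticMap.weightedSumSquares_apply, smul_eq_mul]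

lemma Qpq_polar (p q : ℕ) (v w : Fin (p + q) → ℝ) :
    QuadraticMap.polar (Qpq p q) v w
      = ∑ i : Fin (p + q), (if (i : ℕ) < p then (1 : ℝ) else -1) * (2 * (v i * w i)) := by
  simp only [QuadraticMap.polar, Qpq_apply, Pi.add_apply]
  rw [← Finset.sum_sub_distrib, ← Finset.sum_sub_distrib]
  exact Finset.sum_congr rfl fun i _ => by ring

lemma Qpq_polar_single {p q : ℕ} {i j : Fin (p + q)} (h : i ≠ j) :
    QuadraticMap.polar (Qpq p q) (Pi.single i 1) (Pi.single j 1) = 0 := by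
  rw [Qpq_polar]
  refine Finset.sum_eq_zero fun k _ => ?_
  rcases eq_or_ne k i with rfl | hk
  · rw [Pi.single_eq_of_ne h]; ring
  · rw [Pi.single_eq_of_ne hk]; ring

lemma Qpq_single {p q : ℕ} {i : Fin (p + q)} (hi : (i : ℕ) < p) :
    Qpq p q (Pi.single i 1) = 1 := by
  rw [Qpq_apply]
  rw [Finset.sum_eq_single i]
  · simp [hi]
  · intro k _ hk
    rw [Pi.single_eq_of_ne hk]; ring
  · simp

lemma ι_anti {p q : ℕ} {i j : Fin (p + q)} (h : i ≠ j) :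
    ι (Qpq p q) (Pi.single i 1) * ι (Qpq p q) (Pi.single j 1)
      = -(ι (Qpq p q) (Pi.single j 1) * ι (Qpq p q) (Pi.single i 1)) := by
  have := CliffordAlgebra.ι_mul_ι_add_swap (Q := Qpq p q) (Pi.single i 1) (Pi.single j 1)
  rw [Qpq_polar_single h, map_zero] at this
  exact eq_neg_of_add_eq_zero_left this

lemma mul_neg_one_pow_mul {A : Type*} [Ring A] (a z : A) (n : ℕ) :
    a * ((-1) ^ n * z) = (-1) ^ n * (a * z) := by
  rw [← mul_assoc, ((Commute.neg_one_left a).pow_left n).symm.eq, mul_assoc]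

lemma neg_one_pow_mul_self {A : Type*} [Ring A] (n : ℕ) :
    ((-1 : A) ^ n) * ((-1) ^ n) = 1 := by
  rw [← pow_add, ← two_mul, pow_mul]; norm_num

/-- The generators of `Cℓ(8,0)`. -/
noncomputable def gen (i : Fin (8 + 0)) : CliffordAlgebra (Qpq 8 0) :=
  ι (Qpq 8 0) (Pi.single i 1)

lemma gen_sq (i : Fin (8 + 0)) : gen i * gen i = 1 := by
  rw [gen, CliffordAlgebra.ι_sq_scalar, Qpq_single (by omega), map_one]

lemma gen_anti {i j : Fin (8 + 0)} (h : i ≠ j) : gen i * gen j = -(gen j * gen i) :=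
  ι_anti h

/-- Products of generators. -/
noncomputable def P (l : List (Fin (8 + 0))) : CliffordAlgebra (Qpq 8 0) :=
  (l.map gen).prod

lemma P_cons (j : Fin (8 + 0)) (t : List (Fin (8 + 0))) : P (j :: t) = gen j * P t := by
  rw [P, List.map_cons, List.prod_cons]; rfl

lemma P_append (s t : List (Fin (8 + 0))) : P (s ++ t) = P s * P t := by
  rw [P, List.map_append, List.prod_append]; rfl

lemma P_mul_gen {l : List (Fin (8 + 0))} {j : Fin (8 + 0)} (h : j ∉ l) :
    P l * gen j = (-1) ^ l.length * (gen j * P l) := by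
  have := list_prod_anticomm (gen j) (l.map gen) ?_
  · simpa [P] using this
  · intro a ha
    obtain ⟨i, hi, rfl⟩ := List.mem_map.mp ha
    exact gen_anti (fun hij => h (hij ▸ hi))

lemma gen_mul_P {l : List (Fin (8 + 0))} {j : Fin (8 + 0)} (h : j ∉ l) :
    gen j * P l = (-1) ^ l.length * (P l * gen j) := by
  rw [P_mul_gen h, mul_neg_one_pow_mul, ← mul_assoc, neg_one_pow_mul_self, one_mul]

/-- The volume element of `Cℓ(8,0)`. -/
noncomputable def ωe : CliffordAlgebra (Qpq 8 0) := P (List.finRange (8 + 0))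

lemma omega_mul_gen (j : Fin (8 + 0)) : ωe * gen j = -(gen j * ωe) := by
  obtain ⟨s, t, hst⟩ := List.append_of_mem (List.mem_finRange j)
  have hnd := List.nodup_finRange (8 + 0)
  rw [hst] at hnd
  rw [List.nodup_append] at hnd
  obtain ⟨hs, hc, hdisj⟩ := hnd
  have hjt : j ∉ t := (List.nodup_cons.mp hc).1
  have hjs : j ∉ s := fun hj => hdisj j hj j List.mem_cons_self rfl
  have hlen : s.length + t.length = 7 := by
    have := congrArg List.length hst
    simp [List.length_append] at this
    omega
  have key1 : ωe * gen j = (-1) ^ t.length * (P s * P t) := by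
    rw [ωe, hst, P_append, P_cons]
    calc P s * (gen j * P t) * gen j = P s * (gen j * (P t * gen j)) := by
          simp only [mul_assoc]
    _ = P s * (gen j * ((-1) ^ t.length * (gen j * P t))) := by rw [P_mul_gen hjt]
    _ = (-1) ^ t.length * (P s * (gen j * (gen j * P t))) := by
          rw [mul_neg_one_pow_mul, mul_neg_one_pow_mul]
    _ = (-1) ^ t.length * (P s * P t) := by rw [← mul_assoc (gen j), gen_sq, one_mul]
  have key2 : gen j * ωe = (-1) ^ s.length * (P s * P t) := by
    rw [ωe, hst, P_append, P_cons]
    calc gen j * (P s * (gen j * P t)) = (gen j * P s) * (gen j * P t) := by rw [mul_assoc]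
    _ = ((-1) ^ s.length * (P s * gen j)) * (gen j * P t) := by rw [gen_mul_P hjs]
    _ = (-1) ^ s.length * (P s * (gen j * (gen j * P t))) := by
          simp only [mul_assoc]
    _ = (-1) ^ s.length * (P s * P t) := by rw [← mul_assoc (gen j), gen_sq, one_mul]
  rw [key1, key2]
  have hsign : ((-1 : CliffordAlgebra (Qpq 8 0)) ^ t.length) = -((-1) ^ s.length) := by
    rcases Nat.even_or_odd s.length with he | ho
    · have ht : Odd t.length := by
        rcases he with ⟨k, hk⟩; exact ⟨3 - k, by omega⟩
      rw [he.neg_one_pow, ht.neg_one_pow]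
    · have ht : Even t.length := by
        rcases ho with ⟨k, hk⟩; exact ⟨3 - k, by omega⟩
      rw [ho.neg_one_pow, ht.neg_one_pow, neg_neg]
  rw [hsign, neg_mul]

lemma ι_eq_sum (v : Fin (8 + 0) → ℝ) :
    ι (Qpq 8 0) v = ∑ j, v j • gen j := by
  have hv : v = ∑ j, v j • (Pi.single j 1 : Fin (8 + 0) → ℝ) := by
    funext k
    simp [Pi.single_apply]
  conv_lhs => rw [hv]
  rw [map_sum]
  exact Finset.sum_congr rfl fun j _ => by rw [map_smul]; rfl

lemma omega_mul_ι (v : Fin (8 + 0) → ℝ) :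
    ωe * ι (Qpq 8 0) v = -(ι (Qpq 8 0) v * ωe) := by
  rw [ι_eq_sum, Finset.mul_sum, Finset.sum_mul, ← Finset.sum_neg_distrib]
  exact Finset.sum_congr rfl fun j _ => by
    rw [mul_smul_comm, smul_mul_assoc, omega_mul_gen, smul_neg]

/-- sum 0 + 1 + ... + (n-1) -/
def ε : ℕ → ℕ
  | 0 => 0
  | n + 1 => n + ε n

lemma P_sq : ∀ l : List (Fin (8 + 0)), l.Nodup → P l * P l = (-1) ^ ε l.length := by
  intro l
  induction l with
  | nil => simp [P, ε]
  | cons j t ih =>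
    intro h
    obtain ⟨hjt, ht⟩ := List.nodup_cons.mp h
    rw [P_cons]
    calc gen j * P t * (gen j * P t) = gen j * ((P t * gen j) * P t) := by
          simp only [mul_assoc]
    _ = gen j * (((-1) ^ t.length * (gen j * P t)) * P t) := by rw [P_mul_gen hjt]
    _ = (-1) ^ t.length * (gen j * (gen j * (P t * P t))) := by
          rw [mul_assoc, mul_neg_one_pow_mul]
          simp only [mul_assoc]
    _ = (-1) ^ t.length * (P t * P t) := by rw [← mul_assoc (gen j), gen_sq, one_mul]
    _ = (-1) ^ t.length * (-1) ^ ε t.length := by rw [ih ht]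
    _ = (-1) ^ ε (j :: t).length := by rw [← pow_add, List.length_cons, ε]

lemma omega_sq : ωe * ωe = 1 := by
  rw [ωe, P_sq _ (List.nodup_finRange _), List.length_finRange]
  norm_num [ε]

section Main

variable (p q : ℕ)

/-- The inclusion `Cℓ(8,0) → Cℓ(Q₁ × Q₂)`. -/
noncomputable def g2 : CliffordAlgebra (Qpq 8 0) →ₐ[ℝ]
    CliffordAlgebra ((Qpq p q).prod (Qpq 8 0)) :=
  CliffordAlgebra.map (QuadraticMap.Isometry.inr _ _)

lemma g2_ι (w : Fin (8 + 0) → ℝ) :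
    g2 p q (ι (Qpq 8 0) w) = ι ((Qpq p q).prod (Qpq 8 0)) (0, w) := by
  rw [g2, CliffordAlgebra.map_apply_ι]
  rfl

/-- The volume element inside `Cℓ(Q₁ × Q₂)`. -/
noncomputable def ω' : CliffordAlgebra ((Qpq p q).prod (Qpq 8 0)) := g2 p q ωe

lemma ω'_sq : ω' p q * ω' p q = 1 := by
  rw [ω', ← map_mul, omega_sq, map_one]

lemma ι_prod_anti (v : Fin (p + q) → ℝ) (w : Fin (8 + 0) → ℝ) :
    ι ((Qpq p q).prod (Qpq 8 0)) (v, 0) * ι ((Qpq p q).prod (Qpq 8 0)) (0, w)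
      = -(ι ((Qpq p q).prod (Qpq 8 0)) (0, w) * ι ((Qpq p q).prod (Qpq 8 0)) (v, 0)) := by
  have := CliffordAlgebra.ι_mul_ι_add_swap (Q := (Qpq p q).prod (Qpq 8 0)) (v, 0) (0, w)
  rw [QuadraticMap.polar_prod] at this
  simp only [QuadraticMap.polar_zero_right, QuadraticMap.polar_zero_left, add_zero,
    map_zero] at this
  exact eq_neg_of_add_eq_zero_left this

lemma ω'_mul_ι_right (w : Fin (8 + 0) → ℝ) :
    ω' p q * ι ((Qpq p q).prod (Qpq 8 0)) (0, w)
      = -(ι ((Qpq p q).prod (Qpq 8 0)) (0, w) * ω' p q) := by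
  rw [ω', ← g2_ι, ← map_mul, omega_mul_ι, map_neg, map_mul, g2_ι]

lemma ω'_mul_ι_left (v : Fin (p + q) → ℝ) :
    ω' p q * ι ((Qpq p q).prod (Qpq 8 0)) (v, 0)
      = ι ((Qpq p q).prod (Qpq 8 0)) (v, 0) * ω' p q := by
  set x := ι ((Qpq p q).prod (Qpq 8 0)) (v, 0) with hx
  have hω : ω' p q = ((List.finRange (8 + 0)).map
      (fun k => ι ((Qpq p q).prod (Qpq 8 0)) (0, Pi.single k 1))).prod := by
    rw [ω', ωe, P, map_list_prod, List.map_map]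
    refine congrArg List.prod (List.map_congr_left fun k _ => ?_)
    exact g2_ι p q _
  have key := list_prod_anticomm x ((List.finRange (8 + 0)).map
      (fun k => ι ((Qpq p q).prod (Qpq 8 0)) (0, Pi.single k 1))) ?_
  · rw [hω, key, List.length_map, List.length_finRange]
    norm_num
  · intro a ha
    obtain ⟨k, _, rfl⟩ := List.mem_map.mp ha
    have h := ι_prod_anti p q v (Pi.single k 1)
    rw [h, neg_neg]

noncomputable def Flin : ((Fin (p + q) → ℝ) × (Fin (8 + 0) → ℝ)) →ₗ[ℝ]
    CliffordAlgebra (Qpq p q) ⊗[ℝ] CliffordAlgebra (Qpq 8 0) :=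
  ((TensorProduct.mk ℝ _ _).flip ωe ∘ₗ (ι (Qpq p q)) ∘ₗ LinearMap.fst ℝ _ _)
    + ((TensorProduct.mk ℝ _ _) 1 ∘ₗ (ι (Qpq 8 0)) ∘ₗ LinearMap.snd ℝ _ _)

lemma Flin_apply (v : Fin (p + q) → ℝ) (w : Fin (8 + 0) → ℝ) :
    Flin p q (v, w) = ι (Qpq p q) v ⊗ₜ ωe + 1 ⊗ₜ ι (Qpq 8 0) w := rfl

lemma Flin_cond (m : (Fin (p + q) → ℝ) × (Fin (8 + 0) → ℝ)) :
    Flin p q m * Flin p q m = algebraMap ℝ _ (((Qpq p q).prod (Qpq 8 0)) m) := by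
  obtain ⟨v, w⟩ := m
  rw [Flin_apply, add_mul, mul_add, mul_add, Algebra.TensorProduct.tmul_mul_tmul,
    Algebra.TensorProduct.tmul_mul_tmul, Algebra.TensorProduct.tmul_mul_tmul,
    Algebra.TensorProduct.tmul_mul_tmul, mul_one, one_mul, one_mul,
    CliffordAlgebra.ι_sq_scalar, omega_sq, CliffordAlgebra.ι_sq_scalar, omega_mul_ι,
    TensorProduct.tmul_neg, add_assoc, neg_add_cancel_left, QuadraticMap.prod_apply,
    Algebra.algebraMap_eq_smul_one, Algebra.algebraMap_eq_smul_one,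
    Algebra.algebraMap_eq_smul_one, ← TensorProduct.smul_tmul', TensorProduct.tmul_smul,
    ← add_smul]
  rfl

/-- The forward map `Cℓ(Q₁ × Q₂) → Cℓ Q₁ ⊗ Cℓ Q₂`. -/
noncomputable def Fwd : CliffordAlgebra ((Qpq p q).prod (Qpq 8 0)) →ₐ[ℝ]
    CliffordAlgebra (Qpq p q) ⊗[ℝ] CliffordAlgebra (Qpq 8 0) :=
  CliffordAlgebra.lift _ ⟨Flin p q, Flin_cond p q⟩

lemma Fwd_ι (v : Fin (p + q) → ℝ) (w : Fin (8 + 0) → ℝ) :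
    Fwd p q (ι _ (v, w)) = ι (Qpq p q) v ⊗ₜ ωe + 1 ⊗ₜ ι (Qpq 8 0) w := by
  rw [Fwd, CliffordAlgebra.lift_ι_apply, Flin_apply]

noncomputable def Glin : (Fin (p + q) → ℝ) →ₗ[ℝ]
    CliffordAlgebra ((Qpq p q).prod (Qpq 8 0)) :=
  LinearMap.mulRight ℝ (ω' p q) ∘ₗ (ι ((Qpq p q).prod (Qpq 8 0))) ∘ₗ LinearMap.inl ℝ _ _

lemma Glin_apply (v : Fin (p + q) → ℝ) :
    Glin p q v = ι ((Qpq p q).prod (Qpq 8 0)) (v, 0) * ω' p q := rfl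

lemma Glin_cond (v : Fin (p + q) → ℝ) :
    Glin p q v * Glin p q v = algebraMap ℝ _ (Qpq p q v) := by
  rw [Glin_apply]
  set x := ι ((Qpq p q).prod (Qpq 8 0)) (v, 0) with hx
  calc x * ω' p q * (x * ω' p q) = x * (ω' p q * x) * ω' p q := by simp only [mul_assoc]
  _ = x * (x * ω' p q) * ω' p q := by rw [ω'_mul_ι_left]
  _ = (x * x) * (ω' p q * ω' p q) := by simp only [mul_assoc]
  _ = algebraMap ℝ _ (Qpq p q v) := by
      rw [ω'_sq, mul_one, hx, CliffordAlgebra.ι_sq_scalar, QuadraticMap.prod_apply]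
      simp

/-- The inclusion `Cℓ Q₁ → Cℓ(Q₁ × Q₂)` twisted by the volume element. -/
noncomputable def g1 : CliffordAlgebra (Qpq p q) →ₐ[ℝ]
    CliffordAlgebra ((Qpq p q).prod (Qpq 8 0)) :=
  CliffordAlgebra.lift _ ⟨Glin p q, Glin_cond p q⟩

lemma g1_ι (v : Fin (p + q) → ℝ) :
    g1 p q (ι _ v) = ι ((Qpq p q).prod (Qpq 8 0)) (v, 0) * ω' p q := by
  rw [g1, CliffordAlgebra.lift_ι_apply, Glin_apply]

lemma commute_g1_g2 (x : CliffordAlgebra (Qpq p q)) (y : CliffordAlgebra (Qpq 8 0)) :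
    Commute (g1 p q x) (g2 p q y) := by
  have hgen : ∀ (v : Fin (p + q) → ℝ) (w : Fin (8 + 0) → ℝ),
      Commute (g1 p q (ι _ v)) (g2 p q (ι _ w)) := by
    intro v w
    rw [g1_ι, g2_ι, Commute]
    set a := ι ((Qpq p q).prod (Qpq 8 0)) (v, 0) with ha
    set b := ι ((Qpq p q).prod (Qpq 8 0)) (0, w) with hb
    show a * ω' p q * b = b * (a * ω' p q)
    calc a * ω' p q * b = a * (ω' p q * b) := by rw [mul_assoc]
    _ = a * (-(b * ω' p q)) := by rw [ω'_mul_ι_right]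
    _ = -(a * b) * ω' p q := by rw [mul_neg, neg_mul, mul_assoc]
    _ = b * a * ω' p q := by rw [ha, hb, ι_prod_anti, neg_neg]
    _ = b * (a * ω' p q) := by rw [mul_assoc]
  induction x using CliffordAlgebra.induction with
  | algebraMap r =>
    rw [AlgHom.commutes]
    exact Algebra.commute_algebraMap_left r _
  | ι v =>
    induction y using CliffordAlgebra.induction with
    | algebraMap r =>
      rw [AlgHom.commutes]
      exact Commute.symm (Algebra.commute_algebraMap_left r _)
    | ι w => exact hgen v w
    | mul a b ha hb => rw [map_mul]; exact ha.mul_right hb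
    | add a b ha hb => rw [map_add]; exact ha.add_right hb
  | mul a b ha hb => rw [map_mul]; exact ha.mul_left hb
  | add a b ha hb => rw [map_add]; exact ha.add_left hb

/-- The backward map. -/
noncomputable def Bwd : CliffordAlgebra (Qpq p q) ⊗[ℝ] CliffordAlgebra (Qpq 8 0) →ₐ[ℝ]
    CliffordAlgebra ((Qpq p q).prod (Qpq 8 0)) :=
  Algebra.TensorProduct.lift (g1 p q) (g2 p q) (commute_g1_g2 p q)

lemma Fwd_comp_g2 : (Fwd p q).comp (g2 p q) = Algebra.TensorProduct.includeRight := by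
  apply CliffordAlgebra.hom_ext
  apply LinearMap.ext
  intro w
  show Fwd p q (g2 p q (ι _ w)) = Algebra.TensorProduct.includeRight (ι _ w)
  rw [g2_ι, Fwd_ι, map_zero, TensorProduct.zero_tmul, zero_add,
    Algebra.TensorProduct.includeRight_apply]

lemma Fwd_ω' : Fwd p q (ω' p q) = 1 ⊗ₜ ωe := by
  have := AlgHom.congr_fun (Fwd_comp_g2 p q) ωe
  simpa [ω'] using this

/-- The main equivalence: `Cℓ(Q₁ × Q₂) ≃ₐ Cℓ Q₁ ⊗ Cℓ Q₂`. -/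
noncomputable def prodEquivTensor :
    CliffordAlgebra ((Qpq p q).prod (Qpq 8 0)) ≃ₐ[ℝ]
      CliffordAlgebra (Qpq p q) ⊗[ℝ] CliffordAlgebra (Qpq 8 0) := by
  refine AlgEquiv.ofAlgHom (Fwd p q) (Bwd p q) ?_ ?_
  · apply Algebra.TensorProduct.ext
    · apply CliffordAlgebra.hom_ext
      apply LinearMap.ext
      intro v
      show Fwd p q (Bwd p q (ι (Qpq p q) v ⊗ₜ 1)) = ι (Qpq p q) v ⊗ₜ 1
      rw [Bwd, Algebra.TensorProduct.lift_tmul, map_one, mul_one, g1_ι, map_mul, Fwd_ω']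
      have : Fwd p q (ι ((Qpq p q).prod (Qpq 8 0)) (v, 0)) = ι (Qpq p q) v ⊗ₜ ωe := by
        rw [Fwd_ι]
        simp
      rw [this, Algebra.TensorProduct.tmul_mul_tmul, mul_one, omega_sq]
    · apply CliffordAlgebra.hom_ext
      apply LinearMap.ext
      intro w
      show Fwd p q (Bwd p q ((1 : CliffordAlgebra (Qpq p q)) ⊗ₜ ι (Qpq 8 0) w))
          = (1 : CliffordAlgebra (Qpq p q)) ⊗ₜ ι (Qpq 8 0) w
      rw [Bwd, Algebra.TensorProduct.lift_tmul, map_one, one_mul]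
      have := AlgHom.congr_fun (Fwd_comp_g2 p q) (ι (Qpq 8 0) w)
      simpa using this
  · apply CliffordAlgebra.hom_ext
    apply LinearMap.ext
    intro m
    obtain ⟨v, w⟩ := m
    show Bwd p q (Fwd p q (ι _ (v, w))) = ι ((Qpq p q).prod (Qpq 8 0)) (v, w)
    have hω : g2 p q ωe = ω' p q := rfl
    rw [Fwd_ι, map_add, Bwd, Algebra.TensorProduct.lift_tmul,
      Algebra.TensorProduct.lift_tmul, map_one, one_mul, g1_ι, hω,
      mul_assoc, ω'_sq, mul_one, g2_ι, ← map_add, Prod.mk_add_mk]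
    simp

end Main

section Isom
variable (p q : ℕ)

def σf : (Fin (p + q) ⊕ Fin (8 + 0)) → Fin ((p + 8) + q) :=
  Sum.elim
    (fun i => if h : (i : ℕ) < p then ⟨i, by omega⟩
      else ⟨(i : ℕ) + 8, by have := i.isLt; omega⟩)
    (fun k => ⟨p + (k : ℕ), by have := k.isLt; omega⟩)

lemma σf_inl (i : Fin (p + q)) :
    ((σf p q (Sum.inl i)) : ℕ) = if (i : ℕ) < p then (i : ℕ) else (i : ℕ) + 8 := by
  dsimp only [σf, Sum.elim_inl]
  split_ifs <;> rfl

lemma σf_inr (k : Fin (8 + 0)) : ((σf p q (Sum.inr k)) : ℕ) = p + (k : ℕ) := rfl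

lemma σf_bij : Function.Bijective (σf p q) := by
  constructor
  · rintro (i | k) (i' | k') h <;> have hval := congrArg (Fin.val) h
    · rw [σf_inl p q i, σf_inl p q i'] at hval
      split_ifs at hval with h1 h2 h2
      · exact congrArg Sum.inl (Fin.ext hval)
      · exfalso; omega
      · exfalso; omega
      · exact congrArg Sum.inl (Fin.ext (by omega))
    · exfalso
      rw [σf_inl p q i, σf_inr p q k'] at hval
      have hk := k'.isLt
      split_ifs at hval with h1 <;> omega
    · exfalso
      rw [σf_inr p q k, σf_inl p q i'] at hval
      have hk := k.isLt
      split_ifs at hval with h1 <;> omega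
    · rw [σf_inr p q k, σf_inr p q k'] at hval
      exact congrArg Sum.inr (Fin.ext (by omega))
  · intro j
    by_cases h : (j : ℕ) < p
    · exact ⟨Sum.inl ⟨j, by omega⟩, Fin.ext (by rw [σf_inl]; simp [h])⟩
    · by_cases h2 : (j : ℕ) < p + 8
      · exact ⟨Sum.inr ⟨(j : ℕ) - p, by omega⟩, Fin.ext (by rw [σf_inr]; simp; omega)⟩
      · refine ⟨Sum.inl ⟨(j : ℕ) - 8, by have := j.isLt; omega⟩, Fin.ext ?_⟩
        rw [σf_inl, if_neg (by simp; omega)]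
        simp
        omega

noncomputable def σe : (Fin (p + q) ⊕ Fin (8 + 0)) ≃ Fin ((p + 8) + q) :=
  Equiv.ofBijective _ (σf_bij p q)

lemma σe_inl_lt {i : Fin (p + q)} (h : (i : ℕ) < p) : ((σe p q (Sum.inl i)) : ℕ) = i := by
  have := σf_inl p q i
  rw [if_pos h] at this
  exact this

lemma σe_inl_ge {i : Fin (p + q)} (h : ¬ (i : ℕ) < p) : ((σe p q (Sum.inl i)) : ℕ) = i + 8 := by
  have := σf_inl p q i
  rw [if_neg h] at this
  exact this

lemma σe_inr (k : Fin (8 + 0)) : ((σe p q (Sum.inr k)) : ℕ) = p + k := σf_inr p q k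

noncomputable def isomPQ : (Qpq (p + 8) q).IsometryEquiv ((Qpq p q).prod (Qpq 8 0)) where
  toLinearEquiv := (LinearEquiv.funCongrLeft ℝ ℝ (σe p q)).trans
    (LinearEquiv.sumArrowLequivProdArrow _ _ ℝ ℝ)
  map_app' := by
    intro m
    have happ : ((LinearEquiv.funCongrLeft ℝ ℝ (σe p q)).trans
        (LinearEquiv.sumArrowLequivProdArrow _ _ ℝ ℝ)) m
        = (fun (i : Fin (p + q)) => m (σe p q (Sum.inl i)),
           fun (k : Fin (8 + 0)) => m (σe p q (Sum.inr k))) := rfl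
    show (QuadraticMap.prod (Qpq p q) (Qpq 8 0)) (((LinearEquiv.funCongrLeft ℝ ℝ (σe p q)).trans
        (LinearEquiv.sumArrowLequivProdArrow _ _ ℝ ℝ)) m) = _
    rw [happ, QuadraticMap.prod_apply, Qpq_apply, Qpq_apply, Qpq_apply,
      ← Equiv.sum_comp (σe p q) (fun j => (if (j : ℕ) < p + 8 then (1:ℝ) else -1) * (m j * m j)),
      Fintype.sum_sum_type]
    congr 1
    · refine Finset.sum_congr rfl fun i _ => ?_
      by_cases h : (i : ℕ) < p
      · rw [if_pos h, if_pos (by rw [σe_inl_lt p q h]; omega)]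
      · rw [if_neg h, if_neg (by rw [σe_inl_ge p q h]; have := i.isLt; omega)]
    · refine Finset.sum_congr rfl fun k _ => ?_
      rw [if_pos (by have := k.isLt; omega), if_pos (by rw [σe_inr]; have := k.isLt; omega)]

end Isom

end CliffPeriod

/-- Periodicity theorem: `Cℓ(p+8, q) ≅ Cℓ(p, q) ⊗ Cℓ(8, 0)`. -/
theorem clifford_periodicity (p q : ℕ) :
    Nonempty (CliffordAlgebra (Qpq (p + 8) q) ≃ₐ[ℝ]
      (CliffordAlgebra (Qpq p q) ⊗[ℝ] CliffordAlgebra (Qpq 8 0))) := by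
  exact ⟨(CliffordAlgebra.equivOfIsometry (CliffPeriod.isomPQ p q)).trans
    (CliffPeriod.prodEquivTensor p q)⟩
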